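/- For each frame of PG(m,q) with q = (q')^(ρ+1), there exists a unique q'-subgeometry of PG(m,q) containing each point of the frame. -/

import Mathlib

def IsSubgeometry (K F : Type*) [Field K] [Field F] [Algebra K F] (m d : ℕ)
    (B : Set (Projectivization F (Fin (m + 1) → F))) : Prop :=
  ∃ b : Fin (d + 1) → (Fin (m + 1) → F), LinearIndependent F b ∧
    B = {P | ∃ (v : Fin (m + 1) → F) (hv : v ≠ 0),
      v ∈ Submodule.span K (Set.range b) ∧ P = Projectivization.mk F v hv}

def IsFrame (F : Type*) [Field F] (m : ℕ)
    (f : Fin (m + 2) → Projectivization F (Fin (m + 1) → F)) : Prop :=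
  Function.Injective f ∧
    ∀ i : Fin (m + 2),
      LinearIndependent F (fun j : {j : Fin (m + 2) // j ≠ i} => (f j).rep)

section aux
variable {K V : Type*} [Field K] [AddCommGroup V] [Module K V]

lemma span_units_smul {ι : Type*} (c : ι → Kˣ) (w : ι → V) :
    Submodule.span K (Set.range (fun j => c j • w j)) = Submodule.span K (Set.range w) := by
  apply le_antisymm <;> rw [Submodule.span_le] <;> rintro _ ⟨j, rfl⟩
  · exact Submodule.smul_mem _ _ (Submodule.subset_span (Set.mem_range_self j))
  · have : w j = (c j)⁻¹ • (c j • w j) := by simp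
    rw [this]
    exact Submodule.smul_mem _ _ (Submodule.subset_span (Set.mem_range_self j))
end aux

theorem stmt8 (K F : Type*) [Field K] [Field F] [Algebra K F] [Fintype K] [Fintype F]
    (ρ m : ℕ) (hq : Fintype.card F = Fintype.card K ^ (ρ + 1))
    (f : Fin (m + 2) → Projectivization F (Fin (m + 1) → F)) (hf : IsFrame F m f) :
    ∃! B : Set (Projectivization F (Fin (m + 1) → F)),
      IsSubgeometry K F m m B ∧ ∀ i, f i ∈ B := by
  classical
  obtain ⟨hinjf, hli⟩ := hf
  set e : Fin (m + 2) → (Fin (m + 1) → F) := fun i => (f i).rep with he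
  -- the independent family `g` obtained by dropping the last frame point
  set g : Fin (m + 1) → (Fin (m + 1) → F) := fun j => e j.castSucc with hgdef
  have hg : LinearIndependent F g := by
    have hι : Function.Injective (fun j : Fin (m + 1) =>
        (⟨j.castSucc, (Fin.castSucc_lt_last j).ne⟩ : {k : Fin (m + 2) // k ≠ Fin.last (m + 1)})) := by
      intro a b hab
      exact Fin.castSucc_injective _ (congrArg Subtype.val hab)
    have h := (hli (Fin.last (m + 1))).comp _ hι
    exact h
  have hcard : Fintype.card (Fin (m + 1)) = Module.finrank F (Fin (m + 1) → F) := by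
    simp [Module.finrank_fin_fun]
  set gB : Module.Basis (Fin (m + 1)) F (Fin (m + 1) → F) :=
    basisOfLinearIndependentOfCardEqFinrank hg hcard with hgB'
  have hgB : ∀ j, gB j = g j := fun j => by
    rw [hgB', coe_basisOfLinearIndependentOfCardEqFinrank]
  set c : Fin (m + 1) → F := fun j => gB.repr (e (Fin.last (m + 1))) j with hcdef
  have hsum : ∑ j, c j • g j = e (Fin.last (m + 1)) := by
    conv_rhs => rw [← gB.sum_repr (e (Fin.last (m + 1)))]
    exact Finset.sum_congr rfl fun j _ => by rw [hgB]
  have hcne : ∀ j, c j ≠ 0 := by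
    intro j hj
    have hsup : ↑(gB.repr (e (Fin.last (m + 1)))).support ⊆ {k | k ≠ j} := by
      intro k hk
      simp only [Set.mem_setOf_eq]
      rintro rfl
      exact (Finsupp.mem_support_iff.mp hk) hj
    have hmem : e (Fin.last (m + 1)) ∈ Submodule.span F (gB '' {k | k ≠ j}) :=
      gB.mem_span_image.mpr hsup
    have hlast : (Fin.last (m + 1)) ≠ j.castSucc := (Fin.castSucc_lt_last j).ne'
    set i0 : {k : Fin (m + 2) // k ≠ j.castSucc} := ⟨Fin.last (m + 1), hlast⟩ with hi0
    have hsubset : (gB '' {k | k ≠ j}) ⊆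
        (fun k : {k : Fin (m + 2) // k ≠ j.castSucc} => (f k).rep) '' {k | k ≠ i0} := by
      rintro _ ⟨k, hk, rfl⟩
      refine ⟨⟨k.castSucc, fun hc => hk (Fin.castSucc_injective _ hc)⟩, ?_, ?_⟩
      · simp only [Set.mem_setOf_eq, hi0, ne_eq, Subtype.mk.injEq]
        exact Fin.ne_of_lt (Fin.castSucc_lt_last k)
      · rw [hgB]
    exact (hli j.castSucc).notMem_span_image (s := {k | k ≠ i0}) (x := i0) (by simp)
      (Submodule.span_mono hsubset hmem)
  set c' : Fin (m + 1) → Fˣ := fun j => Units.mk0 (c j) (hcne j) with hc'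
  set b : Fin (m + 1) → (Fin (m + 1) → F) := fun j => c j • g j with hbdef
  have hb : LinearIndependent F b := by
    have h1 := hg.units_smul c'
    have h2 : (c' • g) = b := by
      funext j
      simp [hbdef, hc', Units.smul_def]
    rwa [h2] at h1
  have hbne : ∀ j, b j ≠ 0 := fun j => smul_ne_zero (hcne j) (hg.ne_zero j)
  set N := Submodule.span K (Set.range b) with hN
  refine ⟨{P | ∃ (v : Fin (m + 1) → F) (hv : v ≠ 0), v ∈ N ∧ P = Projectivization.mk F v hv},
    ⟨⟨b, hb, rfl⟩, ?_⟩, ?_⟩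
  · -- the frame points lie in the subgeometry
    intro i
    rcases Fin.eq_castSucc_or_eq_last i with ⟨j, rfl⟩ | rfl
    · refine ⟨b j, hbne j, Submodule.subset_span (Set.mem_range_self j), ?_⟩
      have h1 : Projectivization.mk F (b j) (hbne j)
          = Projectivization.mk F (g j) (hg.ne_zero j) := by
        refine (Projectivization.mk_eq_mk_iff F (b j) (g j) (hbne j) (hg.ne_zero j)).mpr ⟨c' j, ?_⟩
        simp [hbdef, hc', Units.smul_def]
      rw [h1]
      exact (Projectivization.mk_rep _).symm
    · refine ⟨e (Fin.last (m + 1)), Projectivization.rep_nonzero _, ?_, ?_⟩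
      · rw [← hsum]
        exact Submodule.sum_mem _ fun j _ => Submodule.subset_span (Set.mem_range_self j)
      · exact (Projectivization.mk_rep _).symm
  · rintro B' ⟨⟨b', hb', rfl⟩, hmem⟩
    have hmem' : ∀ j : Fin (m + 1), ∃ (u : Fin (m + 1) → F) (hu : u ≠ 0),
        u ∈ Submodule.span K (Set.range b') ∧ f j.castSucc = Projectivization.mk F u hu :=
      fun j => hmem j.castSucc
    choose v hv0 hvM hvmk using hmem'
    have hlam : ∀ j, ∃ a : Fˣ, a • g j = v j := by
      intro j
      refine (Projectivization.mk_eq_mk_iff F (v j) (g j) (hv0 j) (hg.ne_zero j)).mp ?_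
      rw [← hvmk j]
      exact (Projectivization.mk_rep _).symm
    choose lam hlamv using hlam
    have hvli : LinearIndependent F v := by
      have h1 := hg.units_smul lam
      have h2 : (lam • g) = v := funext fun j => hlamv j
      rwa [h2] at h1
    have halg : Function.Injective fun r : K => r • (1 : F) := by
      intro a b hab
      refine (algebraMap K F).injective ?_
      rw [Algebra.algebraMap_eq_smul_one, Algebra.algebraMap_eq_smul_one]
      exact hab
    have hvK : LinearIndependent K v := hvli.restrict_scalars halg
    have hle : Submodule.span K (Set.range v) ≤ Submodule.span K (Set.range b') :=
      Submodule.span_le.mpr (by rintro _ ⟨j, rfl⟩; exact hvM j)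
    haveI : FiniteDimensional K (Submodule.span K (Set.range b')) :=
      FiniteDimensional.span_of_finite K (Set.finite_range b')
    have hdim1 : Module.finrank K (Submodule.span K (Set.range v)) = m + 1 := by
      rw [finrank_span_eq_card hvK]; simp
    have hdim2 : Module.finrank K (Submodule.span K (Set.range b')) ≤ m + 1 := by
      have h := finrank_range_le_card (R := K) b'
      simpa [Set.finrank] using h
    have hspanv : Submodule.span K (Set.range v) = Submodule.span K (Set.range b') :=
      Submodule.eq_of_le_of_finrank_le hle (by rw [hdim1]; exact hdim2)
    obtain ⟨w, hw0, hwM, hwmk⟩ := hmem (Fin.last (m + 1))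
    obtain ⟨μ0, hμ0⟩ : ∃ a : Fˣ, a • e (Fin.last (m + 1)) = w := by
      refine (Projectivization.mk_eq_mk_iff F w (e (Fin.last (m + 1))) hw0
        (Projectivization.rep_nonzero _)).mp ?_
      rw [← hwmk]
      exact (Projectivization.mk_rep _).symm
    have hwspan : w ∈ Submodule.span K (Set.range v) := hspanv ▸ hwM
    obtain ⟨μ, hμ⟩ := (Submodule.mem_span_range_iff_exists_fun (R := K) (v := v)).mp hwspan
    have hcoef : ∀ j, algebraMap K F (μ j) * (lam j : F) = (μ0 : F) * c j := by
      have hA : ∑ j, ((algebraMap K F (μ j)) * (lam j : F)) • g j = w := by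
        rw [← hμ]
        refine Finset.sum_congr rfl fun j _ => ?_
        rw [← hlamv j, Units.smul_def, ← smul_smul, algebraMap_smul]
      have hB : ∑ j, ((μ0 : F) * c j) • g j = w := by
        rw [← hμ0, Units.smul_def, ← hsum, Finset.smul_sum]
        refine Finset.sum_congr rfl fun j _ => ?_
        rw [smul_smul]
      have hzero : ∑ j, ((algebraMap K F (μ j)) * (lam j : F) - (μ0 : F) * c j) • g j = 0 := by
        simp only [sub_smul, Finset.sum_sub_distrib, hA, hB, sub_self]
      intro j
      exact sub_eq_zero.mp (Fintype.linearIndependent_iff.mp hg _ hzero j)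
    have hμne : ∀ j, μ j ≠ 0 := by
      intro j hj
      have h := hcoef j
      rw [hj, map_zero, zero_mul] at h
      exact (mul_ne_zero μ0.ne_zero (hcne j)) h.symm
    set μ' : Fin (m + 1) → Kˣ := fun j => Units.mk0 (μ j) (hμne j) with hμ'
    have hvb : ∀ j, v j = (μ' j)⁻¹ • ((μ0 : F) • b j) := by
      intro j
      rw [← hlamv j, Units.smul_def]
      have h3 : ((μ' j)⁻¹ : Kˣ) • ((μ0 : F) • b j)
          = ((algebraMap K F (((μ' j)⁻¹ : Kˣ) : K)) * ((μ0 : F) * c j)) • g j := by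
        rw [hbdef]
        simp only []
        rw [smul_smul, Units.smul_def, ← algebraMap_smul F ((((μ' j)⁻¹ : Kˣ) : K)), smul_smul]
      rw [h3]
      congr 1
      have h5 : algebraMap K F (((μ' j)⁻¹ : Kˣ) : K) = (algebraMap K F (μ j))⁻¹ := by
        rw [Units.val_inv_eq_inv_val, map_inv₀]
        rfl
      rw [h5]
      have h6 : algebraMap K F (μ j) ≠ 0 := by
        simpa using hμne j
      field_simp
      linear_combination hcoef j
    have hveq2 : v = fun j => (μ' j)⁻¹ • ((μ0 : F) • b j) := funext hvb
    have hspan2 : Submodule.span K (Set.range v)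
        = Submodule.span K (Set.range fun j => (μ0 : F) • b j) := by
      rw [hveq2]
      exact span_units_smul (fun j => (μ' j)⁻¹) _
    have hmapeq : Submodule.span K (Set.range fun j => (μ0 : F) • b j)
        = Submodule.map (DistribMulAction.toLinearMap K (Fin (m + 1) → F) (μ0 : F)) N := by
      rw [hN, Submodule.map_span]
      congr 1
      rw [← Set.range_comp]
      rfl
    have hsmulmap : ∀ x : Fin (m + 1) → F, x ∈ Submodule.span K (Set.range b') ↔
        ∃ y ∈ N, (μ0 : F) • y = x := by
      intro x
      rw [← hspanv, hspan2, hmapeq]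
      exact Submodule.mem_map
    ext P
    simp only [Set.mem_setOf_eq]
    constructor
    · rintro ⟨u, hu, huM, rfl⟩
      obtain ⟨y, hyN, hyu⟩ := (hsmulmap u).mp huM
      have hy0 : y ≠ 0 := by
        rintro rfl
        rw [smul_zero] at hyu
        exact hu hyu.symm
      refine ⟨y, hy0, hyN, ?_⟩
      refine ((Projectivization.mk_eq_mk_iff F u y hu hy0).mpr ⟨μ0, ?_⟩).symm.symm
      rw [Units.smul_def, hyu]
    · rintro ⟨y, hy0, hyN, rfl⟩
      refine ⟨(μ0 : F) • y, smul_ne_zero μ0.ne_zero hy0,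
        (hsmulmap _).mpr ⟨y, hyN, rfl⟩, ?_⟩
      refine ((Projectivization.mk_eq_mk_iff F ((μ0 : F) • y) y
        (smul_ne_zero μ0.ne_zero hy0) hy0).mpr ⟨μ0, ?_⟩).symm
      rw [Units.smul_def]
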